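/- Let λ > 0 and let q : ℝ → Quaternion ℝ be differentiable with ‖q(t)‖ = 1 for all t ≥ 0 and satisfy the closed-loop sliding-surface kinematics q'(t) = (1/2) · q(t) * ⟦−λ · sgn₊(q°(t)) · q⃗(t)⟧ for all t ≥ 0. If ‖q⃗(0)‖ < 1, then for all t ≥ 0 one has ‖q⃗(t)‖² ≤ ‖q⃗(0)‖² · exp(−λ · √(1 − ‖q⃗(0)‖²) · t); i.e., the vector part of the error quaternion converges exponentially to 0. -/

import Mathlib

noncomputable section

/-- `sgn₊ x = 1` if `x ≥ 0` and `-1` if `x < 0`. -/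
def sgnPlus (x : ℝ) : ℝ := if 0 ≤ x then 1 else -1

/-- The vector (imaginary) part of a quaternion, as a vector in Euclidean `ℝ³`. -/
def vecPart (p : Quaternion ℝ) : EuclideanSpace ℝ (Fin 3) := WithLp.toLp 2 ![p.imI, p.imJ, p.imK]

/-- The pure-imaginary quaternion `⟦v⟧` with vector part `v`. -/
def quatOfVec (v : EuclideanSpace ℝ (Fin 3)) : Quaternion ℝ := ⟨0, v 0, v 1, v 2⟩

private def reCLM : Quaternion ℝ →L[ℝ] ℝ :=
  ⟨QuaternionAlgebra.reₗ (-1 : ℝ) (0 : ℝ) (-1 : ℝ), Quaternion.continuous_re⟩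

private def imICLM : Quaternion ℝ →L[ℝ] ℝ :=
  ⟨QuaternionAlgebra.imIₗ (-1 : ℝ) (0 : ℝ) (-1 : ℝ), Quaternion.continuous_imI⟩

private def imJCLM : Quaternion ℝ →L[ℝ] ℝ :=
  ⟨QuaternionAlgebra.imJₗ (-1 : ℝ) (0 : ℝ) (-1 : ℝ), Quaternion.continuous_imJ⟩

private def imKCLM : Quaternion ℝ →L[ℝ] ℝ :=
  ⟨QuaternionAlgebra.imKₗ (-1 : ℝ) (0 : ℝ) (-1 : ℝ), Quaternion.continuous_imK⟩

private lemma sq_norm_vecPart (p : Quaternion ℝ) :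
    ‖vecPart p‖ ^ 2 = p.imI ^ 2 + p.imJ ^ 2 + p.imK ^ 2 := by
  rw [EuclideanSpace.norm_eq, Real.sq_sqrt (by positivity)]
  simp [vecPart, Fin.sum_univ_three, sq_abs]

@[simp] private lemma quatOfVec_smul_re (c : ℝ) (p : Quaternion ℝ) :
    (quatOfVec (c • vecPart p)).re = 0 := rfl

@[simp] private lemma quatOfVec_smul_imI (c : ℝ) (p : Quaternion ℝ) :
    (quatOfVec (c • vecPart p)).imI = c * p.imI := by simp [quatOfVec, vecPart]

@[simp] private lemma quatOfVec_smul_imJ (c : ℝ) (p : Quaternion ℝ) :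
    (quatOfVec (c • vecPart p)).imJ = c * p.imJ := by simp [quatOfVec, vecPart]

@[simp] private lemma quatOfVec_smul_imK (c : ℝ) (p : Quaternion ℝ) :
    (quatOfVec (c • vecPart p)).imK = c * p.imK := by simp [quatOfVec, vecPart]

private lemma sgnPlus_mul_self (x : ℝ) : sgnPlus x * x = |x| := by
  unfold sgnPlus
  rcases le_or_gt 0 x with h | h
  · rw [if_pos h, abs_of_nonneg h, one_mul]
  · rw [if_neg (not_le.2 h), abs_of_neg h]; ring

theorem sliding_surface_exponential_decay
    (lam : ℝ) (hlam : 0 < lam) (q : ℝ → Quaternion ℝ)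
    (hq : Differentiable ℝ q)
    (hunit : ∀ t ≥ (0 : ℝ), ‖q t‖ = 1)
    (hdyn : ∀ t ≥ (0 : ℝ), deriv q t =
      (1 / 2 : ℝ) • (q t * quatOfVec ((-(lam * sgnPlus (q t).re)) • vecPart (q t))))
    (hinit : ‖vecPart (q 0)‖ < 1) :
    ∀ t ≥ (0 : ℝ), ‖vecPart (q t)‖ ^ 2 ≤
      ‖vecPart (q 0)‖ ^ 2 *
        Real.exp (-(lam * Real.sqrt (1 - ‖vecPart (q 0)‖ ^ 2) * t)) := by
  set V : ℝ → ℝ := fun t => (q t).imI ^ 2 + (q t).imJ ^ 2 + (q t).imK ^ 2 with hVdef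
  have hVnorm : ∀ t, ‖vecPart (q t)‖ ^ 2 = V t := fun t => sq_norm_vecPart _
  have hVnonneg : ∀ t, 0 ≤ V t := fun t => by positivity
  have himI : ∀ t, HasDerivAt (fun s => (q s).imI) ((deriv q t).imI) t := fun t =>
    imICLM.hasFDerivAt.comp_hasDerivAt t (hq t).hasDerivAt
  have himJ : ∀ t, HasDerivAt (fun s => (q s).imJ) ((deriv q t).imJ) t := fun t =>
    imJCLM.hasFDerivAt.comp_hasDerivAt t (hq t).hasDerivAt
  have himK : ∀ t, HasDerivAt (fun s => (q s).imK) ((deriv q t).imK) t := fun t =>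
    imKCLM.hasFDerivAt.comp_hasDerivAt t (hq t).hasDerivAt
  have hV' : ∀ t ≥ (0:ℝ), HasDerivAt V
      (-(lam * sgnPlus (q t).re) * ((q t).re * V t)) t := by
    intro t ht
    have h := (((himI t).pow 2).add ((himJ t).pow 2)).add ((himK t).pow 2)
    rw [hdyn t ht] at h
    refine h.congr_deriv ?_
    simp only [hVdef, Quaternion.imI_mul, Quaternion.imJ_mul, Quaternion.imK_mul,
      quatOfVec_smul_re, quatOfVec_smul_imI, quatOfVec_smul_imJ, quatOfVec_smul_imK,
      Quaternion.re_smul, Quaternion.imI_smul, Quaternion.imJ_smul, Quaternion.imK_smul,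
      smul_eq_mul]
    push_cast
    ring
  have hVcont : Continuous V := by
    have hc := hq.continuous
    exact (((Quaternion.continuous_imI.comp hc).pow 2).add
      ((Quaternion.continuous_imJ.comp hc).pow 2)).add
      ((Quaternion.continuous_imK.comp hc).pow 2)
  have hsum : ∀ t ≥ (0:ℝ), (q t).re ^ 2 + V t = 1 := by
    intro t ht
    have h1 := Quaternion.normSq_eq_norm_mul_self (q t)
    rw [hunit t ht, Quaternion.normSq_def'] at h1
    simpa [hVdef] using by linarith [h1]
  have hmono : AntitoneOn V (Set.Ici 0) := by
    apply antitoneOn_of_deriv_nonpos (convex_Ici 0) hVcont.continuousOn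
    · intro t ht
      rw [interior_Ici] at ht
      exact ((hV' t ht.le).differentiableAt).differentiableWithinAt
    · intro t ht
      rw [interior_Ici] at ht
      rw [(hV' t ht.le).deriv]
      have hs := sgnPlus_mul_self (q t).re
      have heq : -(lam * sgnPlus (q t).re) * ((q t).re * V t)
          = -(lam * |(q t).re| * V t) := by rw [← hs]; ring
      rw [heq]
      exact neg_nonpos.2 (mul_nonneg (mul_nonneg hlam.le (abs_nonneg _)) (hVnonneg t))
  intro T hT
  rw [hVnorm T, hVnorm 0]
  set c0 := Real.sqrt (1 - V 0) with hc0
  have key := le_gronwallBound_of_liminf_deriv_right_le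
    (f := V) (f' := fun t => -(lam * sgnPlus (q t).re) * ((q t).re * V t))
    (δ := V 0) (K := -(lam * c0)) (ε := 0) (a := 0) (b := T)
    hVcont.continuousOn
    (fun s hs r hr => ((hV' s hs.1).hasDerivWithinAt).liminf_right_slope_le hr)
    le_rfl
    (by
      intro s hs
      have hVs : V s ≤ V 0 := hmono Set.self_mem_Ici hs.1 hs.1
      have hre2 : 1 - V 0 ≤ (q s).re ^ 2 := by
        have := hsum s hs.1; linarith
      have habs : c0 ≤ |(q s).re| := by
        rw [hc0, ← Real.sqrt_sq_eq_abs]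
        exact Real.sqrt_le_sqrt hre2
      show -(lam * sgnPlus (q s).re) * ((q s).re * V s) ≤ -(lam * c0) * V s + 0
      have hkey : -(lam * sgnPlus (q s).re) * ((q s).re * V s)
          = -(lam * |(q s).re|) * V s := by
        rw [← sgnPlus_mul_self]; ring
      rw [hkey, add_zero]
      have := mul_le_mul_of_nonneg_right
        (mul_le_mul_of_nonneg_left habs hlam.le) (hVnonneg s)
      linarith)
    T (Set.mem_Icc.2 ⟨hT, le_rfl⟩)
  rw [gronwallBound_ε0, sub_zero] at key
  have harg : -(lam * c0) * T = -(lam * c0 * T) := by ring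
  rw [harg] at key
  exact key

end
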